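/- Control of the negative part of the entropy: let ψ : ℝ² → ℝ be measurable with e^ψ ∈ L¹(ℝ²) and ∫_{ℝ²} e^{ψ(x)} dx > 0, and let f : ℝ² → [0,∞) be measurable such that f·1_{{f≤1}} ∈ L¹(ℝ²) and f·|ψ|·1_{{f≤1}} ∈ L¹(ℝ²). Set m = ∫_{{f≤1}} f(x) dx and assume m > 0. Then ∫_{ℝ²} f(x) (log f(x))_− dx ≤ m log( (∫_{ℝ²} e^{ψ(x)} dx) / m ) − ∫_{{f≤1}} f(x) ψ(x) dx. -/

import Mathlib

open MeasureTheory Real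

/-- Control of the negative part of the entropy. -/
theorem entropy_negative_part_control
    (ψ : EuclideanSpace ℝ (Fin 2) → ℝ) (hψm : Measurable ψ)
    (hψint : Integrable (fun x => Real.exp (ψ x)))
    (hψpos : 0 < ∫ x, Real.exp (ψ x))
    (f : EuclideanSpace ℝ (Fin 2) → ℝ) (hf : Measurable f) (hf0 : ∀ x, 0 ≤ f x)
    (hf1 : IntegrableOn f {x | f x ≤ 1})
    (hfψ : IntegrableOn (fun x => f x * |ψ x|) {x | f x ≤ 1})
    (hm : 0 < ∫ x in {x | f x ≤ 1}, f x) :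
    (∫⁻ x, ENNReal.ofReal (f x * max (-Real.log (f x)) 0)) ≤
      ENNReal.ofReal ((∫ x in {x | f x ≤ 1}, f x) *
          Real.log ((∫ x, Real.exp (ψ x)) / ∫ x in {x | f x ≤ 1}, f x) -
        ∫ x in {x | f x ≤ 1}, f x * ψ x) := by
  set S : Set (EuclideanSpace ℝ (Fin 2)) := {x | f x ≤ 1} with hSdef
  have hS : MeasurableSet S := measurableSet_le hf measurable_const
  set m : ℝ := ∫ x in S, f x with hmdef
  set I : ℝ := ∫ x, Real.exp (ψ x) with hIdef
  set c : ℝ := I / m with hcdef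
  have hc : 0 < c := div_pos hψpos hm
  set g : EuclideanSpace ℝ (Fin 2) → ℝ :=
    fun x => Real.exp (ψ x) / c - f x + f x * Real.log c - f x * ψ x with hgdef
  -- pointwise inequality on S
  have hpt : ∀ x ∈ S, f x * max (-Real.log (f x)) 0 ≤ g x := by
    intro x hx
    have hx1 : f x ≤ 1 := hx
    rcases eq_or_lt_of_le (hf0 x) with h0 | h0
    · simp [hgdef, ← h0]
      positivity
    · have hmax : max (-Real.log (f x)) 0 = -Real.log (f x) :=
        max_eq_left (by simpa using Real.log_nonpos (hf0 x) hx1)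
      have ht : 0 < Real.exp (ψ x) / (f x * c) := by positivity
      have hlog := Real.log_le_sub_one_of_pos ht
      rw [Real.log_div (Real.exp_ne_zero _) (by positivity), Real.log_exp,
        Real.log_mul h0.ne' hc.ne'] at hlog
      have h2 : f x * (ψ x - (Real.log (f x) + Real.log c)) ≤ Real.exp (ψ x) / c - f x := by
        calc f x * (ψ x - (Real.log (f x) + Real.log c))
            ≤ f x * (Real.exp (ψ x) / (f x * c) - 1) :=
              mul_le_mul_of_nonneg_left hlog (hf0 x)
          _ = Real.exp (ψ x) / c - f x := by field_simp
      rw [hmax]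
      simp only [hgdef]
      nlinarith [h2]
  -- the integrand vanishes off S
  have hzero : ∀ x ∉ S, ENNReal.ofReal (f x * max (-Real.log (f x)) 0) = 0 := by
    intro x hx
    have h1 : 1 < f x := lt_of_not_ge hx
    have : max (-Real.log (f x)) 0 = 0 :=
      max_eq_right (by simpa using (Real.log_pos h1).le)
    simp [this]
  -- rewrite the lintegral as a set lintegral over S
  have hind : (fun x => ENNReal.ofReal (f x * max (-Real.log (f x)) 0)) =
      fun x => S.indicator (fun x => ENNReal.ofReal (f x * max (-Real.log (f x)) 0)) x := by
    funext x
    by_cases hx : x ∈ S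
    · simp [Set.indicator_of_mem hx]
    · simp [Set.indicator_of_notMem hx, hzero x hx]
  rw [hind, lintegral_indicator hS]
  -- integrability of the pieces
  have hPint : IntegrableOn (fun x => f x * ψ x) S := by
    refine Integrable.mono hfψ ((hf.mul hψm).aestronglyMeasurable) ?_
    refine Filter.Eventually.of_forall fun x => ?_
    simp only [norm_mul, Real.norm_eq_abs, abs_abs, abs_of_nonneg (hf0 x)]
    exact le_refl _
  have hg1 : IntegrableOn (fun x => Real.exp (ψ x) / c) S :=
    (hψint.integrableOn).div_const c
  have hgint : IntegrableOn g S := by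
    exact ((hg1.sub hf1).add (hf1.mul_const (Real.log c))).sub hPint
  have hgnn : 0 ≤ᵐ[volume.restrict S] g := by
    refine (ae_restrict_iff' hS).mpr (Filter.Eventually.of_forall fun x hx => ?_)
    exact le_trans (mul_nonneg (hf0 x) (le_max_right _ _)) (hpt x hx)
  -- compare with the integral of g
  have hstep : (∫⁻ x in S, ENNReal.ofReal (f x * max (-Real.log (f x)) 0)) ≤
      ENNReal.ofReal (∫ x in S, g x) := by
    rw [MeasureTheory.ofReal_integral_eq_lintegral_ofReal hgint hgnn]
    refine setLIntegral_mono ?_ fun x hx => ENNReal.ofReal_le_ofReal (hpt x hx)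
    exact (((((hψm.exp).div_const c).sub hf).add (hf.mul_const _)).sub
      (hf.mul hψm)).ennreal_ofReal
  refine hstep.trans (ENNReal.ofReal_le_ofReal ?_)
  -- compute and bound the integral of g
  have hsplit : ∫ x in S, g x =
      (∫ x in S, Real.exp (ψ x)) / c - m + m * Real.log c - ∫ x in S, f x * ψ x := by
    have hB : Integrable (fun x => Real.exp (ψ x) / c - f x) (volume.restrict S) := by
      exact hg1.sub hf1
    have hmul : Integrable (fun x => f x * Real.log c) (volume.restrict S) := by
      exact hf1.mul_const _
    have hA : Integrable (fun x => Real.exp (ψ x) / c - f x + f x * Real.log c)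
        (volume.restrict S) := by exact hB.add hmul
    simp only [hgdef]
    rw [integral_sub hA hPint, integral_add hB hmul, integral_sub hg1 hf1,
      integral_div, integral_mul_const]
  have hAle : (∫ x in S, Real.exp (ψ x)) ≤ I :=
    setIntegral_le_integral hψint
      (Filter.Eventually.of_forall fun x => (Real.exp_pos _).le)
  have hIc : I / c = m := by
    rw [hcdef]
    field_simp
  have hlogc : m * Real.log c = m * Real.log (I / m) := by rw [hcdef]
  rw [hsplit]
  have : (∫ x in S, Real.exp (ψ x)) / c ≤ m := by
    rw [← hIc]
    gcongr
  linarith [this]
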